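/- For any matrix A ∈ ℂ^{N×N} with singular value decomposition A = WΣV† (Σ invertible), the polar factor U = WV† minimizes ‖X − A‖_F over all unitary matrices X, i.e., for every unitary X, ‖WV† − A‖_F ≤ ‖X − A‖_F. -/

import Mathlib

open Matrix

/-- The Frobenius norm of a complex matrix. -/
noncomputable def frobNorm {m n : Type*} [Fintype m] [Fintype n] (A : Matrix m n ℂ) : ℝ :=
  Real.sqrt (∑ i, ∑ j, ‖A i j‖ ^ 2)

/-- Squared Frobenius norm, as a sum. -/
noncomputable def frobSq {N : ℕ} (A : Matrix (Fin N) (Fin N) ℂ) : ℝ :=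
  ∑ i, ∑ j, ‖A i j‖ ^ 2

lemma frobSq_eq_trace {N : ℕ} (A : Matrix (Fin N) (Fin N) ℂ) :
    (frobSq A : ℂ) = Matrix.trace (Aᴴ * A) := by
  simp only [frobSq, Matrix.trace, Matrix.diag, Matrix.mul_apply, Matrix.conjTranspose_apply]
  push_cast
  rw [Finset.sum_comm]
  refine Finset.sum_congr rfl fun i _ => Finset.sum_congr rfl fun j _ => ?_
  rw [Complex.star_def, Complex.conj_mul']

lemma frobSq_unitary_mul {N : ℕ} (U A : Matrix (Fin N) (Fin N) ℂ)
    (hU : U ∈ Matrix.unitaryGroup (Fin N) ℂ) : frobSq (U * A) = frobSq A := by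
  have h1 : Uᴴ * U = 1 := hU.1
  have : (frobSq (U * A) : ℂ) = (frobSq A : ℂ) := by
    rw [frobSq_eq_trace, frobSq_eq_trace, Matrix.conjTranspose_mul]
    rw [show Aᴴ * Uᴴ * (U * A) = Aᴴ * (Uᴴ * U) * A by simp only [Matrix.mul_assoc], h1,
      Matrix.mul_one]
  exact_mod_cast this

lemma frobSq_mul_unitary {N : ℕ} (A U : Matrix (Fin N) (Fin N) ℂ)
    (hU : U ∈ Matrix.unitaryGroup (Fin N) ℂ) : frobSq (A * U) = frobSq A := by
  have h1 : U * Uᴴ = 1 := hU.2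
  have : (frobSq (A * U) : ℂ) = (frobSq A : ℂ) := by
    rw [frobSq_eq_trace, frobSq_eq_trace, Matrix.conjTranspose_mul]
    rw [show Uᴴ * Aᴴ * (A * U) = Uᴴ * (Aᴴ * A * U) by simp only [Matrix.mul_assoc],
      Matrix.trace_mul_comm,
      show Aᴴ * A * U * Uᴴ = Aᴴ * A * (U * Uᴴ) by simp only [Matrix.mul_assoc], h1,
      Matrix.mul_one]
  exact_mod_cast this

lemma cnorm_sub_sq (a b : ℂ) :
    ‖a - b‖ ^ 2 = ‖a‖ ^ 2 - 2 * (a * (starRingEnd ℂ) b).re + ‖b‖ ^ 2 := by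
  rw [← Complex.normSq_eq_norm_sq, ← Complex.normSq_eq_norm_sq, ← Complex.normSq_eq_norm_sq]
  simp [Complex.normSq_apply, Complex.mul_re, Complex.conj_re, Complex.conj_im,
    Complex.sub_re, Complex.sub_im]
  ring

/-- Key inequality: for `Y` unitary and `D` positive diagonal,
`frobSq (1 - D) ≤ frobSq (Y - D)`. -/
lemma key_ineq {N : ℕ} (Y : Matrix (Fin N) (Fin N) ℂ)
    (hY : Y ∈ Matrix.unitaryGroup (Fin N) ℂ) (σ : Fin N → ℝ) (hσ : ∀ i, 0 < σ i) :
    frobSq (1 - Matrix.diagonal (fun i => (σ i : ℂ))) ≤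
      frobSq (Y - Matrix.diagonal (fun i => (σ i : ℂ))) := by
  set D := Matrix.diagonal (fun i => (σ i : ℂ)) with hD
  have hrow : ∀ i, ∑ j, ‖Y i j‖ ^ 2 = 1 := by
    intro i
    have h0 : (∑ j, Y i j * (starRingEnd ℂ) (Y i j)) = 1 := by
      have := congrFun (congrFun hY.2 i) i
      simpa [Matrix.mul_apply, Matrix.conjTranspose_apply] using this
    have h2 := congrArg Complex.re h0
    simp only [Complex.re_sum, Complex.one_re] at h2
    rw [← h2]
    refine Finset.sum_congr rfl fun j _ => ?_
    rw [Complex.mul_conj, Complex.ofReal_re, Complex.normSq_eq_norm_sq]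
  unfold frobSq
  apply Finset.sum_le_sum
  intro i _
  have hL : ∑ j, ‖(1 - D) i j‖ ^ 2 = (1 - σ i) ^ 2 := by
    rw [Finset.sum_eq_single i]
    · have h : (1 - D) i i = ((1 - σ i : ℝ) : ℂ) := by
        simp [hD, Matrix.sub_apply, Matrix.one_apply_eq, Matrix.diagonal_apply_eq,
          Complex.ofReal_sub]
      rw [h, Complex.norm_real, Real.norm_eq_abs, sq_abs]
    · intro j _ hj
      simp [hD, Matrix.sub_apply, Matrix.one_apply_ne (Ne.symm hj),
        Matrix.diagonal_apply_ne' _ hj]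
    · simp
  rw [hL]
  have e2 : ∑ j, (Y i j * (starRingEnd ℂ) (D i j)).re = σ i * (Y i i).re := by
    rw [Finset.sum_eq_single i]
    · simp [hD, Matrix.diagonal_apply_eq, Complex.conj_ofReal, Complex.mul_re]
      ring
    · intro j _ hj
      simp [hD, Matrix.diagonal_apply_ne' _ hj]
    · simp
  have e3 : ∑ j, ‖D i j‖ ^ 2 = σ i ^ 2 := by
    rw [Finset.sum_eq_single i]
    · rw [hD, Matrix.diagonal_apply_eq, Complex.norm_real, Real.norm_eq_abs, sq_abs]
    · intro j _ hj
      simp [hD, Matrix.diagonal_apply_ne' _ hj]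
    · simp
  have hR : ∑ j, ‖(Y - D) i j‖ ^ 2 = 1 - 2 * (σ i * (Y i i).re) + σ i ^ 2 := by
    have hterm : ∀ j, ‖(Y - D) i j‖ ^ 2
        = ‖Y i j‖ ^ 2 - 2 * (Y i j * (starRingEnd ℂ) (D i j)).re + ‖D i j‖ ^ 2 := fun j => by
      rw [Matrix.sub_apply, cnorm_sub_sq]
    rw [Finset.sum_congr rfl fun j _ => hterm j, Finset.sum_add_distrib,
      Finset.sum_sub_distrib, ← Finset.mul_sum, hrow i, e2, e3]
  rw [hR]
  have hre : (Y i i).re ≤ 1 := by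
    have h1 : ‖Y i i‖ ^ 2 ≤ 1 := by
      rw [← hrow i]
      exact Finset.single_le_sum (f := fun j => ‖Y i j‖ ^ 2) (fun j _ => by positivity)
        (Finset.mem_univ i)
    have h2 : ‖Y i i‖ ≤ 1 := by nlinarith [norm_nonneg (Y i i)]
    calc (Y i i).re ≤ ‖Y i i‖ := Complex.re_le_norm _
      _ ≤ 1 := h2
  nlinarith [(hσ i).le]

lemma frobNorm_eq {N : ℕ} (A : Matrix (Fin N) (Fin N) ℂ) :
    frobNorm A = Real.sqrt (frobSq A) := rfl

/-- For `A = W Σ Vᴴ` a full SVD with `W, V` unitary and `Σ` positive diagonal, the polar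
factor `U = W Vᴴ` minimizes `‖X − A‖_F` over all unitary matrices `X`. -/
theorem stmt_3 (N : ℕ) (A W V : Matrix (Fin N) (Fin N) ℂ)
    (σ : Fin N → ℝ) (hσ : ∀ i, 0 < σ i)
    (hW : W ∈ Matrix.unitaryGroup (Fin N) ℂ) (hV : V ∈ Matrix.unitaryGroup (Fin N) ℂ)
    (hA : A = W * Matrix.diagonal (fun i => (σ i : ℂ)) * Vᴴ) :
    ∀ X ∈ Matrix.unitaryGroup (Fin N) ℂ, frobNorm (W * Vᴴ - A) ≤ frobNorm (X - A) := by
  intro X hX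
  set D := Matrix.diagonal (fun i => (σ i : ℂ)) with hD
  have hWW : W * Wᴴ = 1 := hW.2
  have hVV' : V * Vᴴ = 1 := hV.2
  have hWH : Wᴴ ∈ Matrix.unitaryGroup (Fin N) ℂ := by
    have := Unitary.star_mem hW
    simpa [Matrix.star_eq_conjTranspose] using this
  have hVH : Vᴴ ∈ Matrix.unitaryGroup (Fin N) ℂ := by
    have := Unitary.star_mem hV
    simpa [Matrix.star_eq_conjTranspose] using this
  have hY : Wᴴ * X * V ∈ Matrix.unitaryGroup (Fin N) ℂ :=
    mul_mem (mul_mem hWH hX) hV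
  have fact1 : W * Vᴴ - A = W * (1 - D) * Vᴴ := by
    rw [hA, Matrix.mul_sub, Matrix.sub_mul, Matrix.mul_one]
  have fact2 : X - A = W * ((Wᴴ * X * V) - D) * Vᴴ := by
    have h : W * (Wᴴ * X * V) * Vᴴ = X := by
      calc W * (Wᴴ * X * V) * Vᴴ = (W * Wᴴ) * X * (V * Vᴴ) := by
            simp only [Matrix.mul_assoc]
        _ = X := by rw [hWW, hVV', Matrix.one_mul, Matrix.mul_one]
    rw [hA, Matrix.mul_sub, Matrix.sub_mul, h]
  rw [frobNorm_eq, frobNorm_eq]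
  apply Real.sqrt_le_sqrt
  calc frobSq (W * Vᴴ - A) = frobSq (1 - D) := by
        rw [fact1, frobSq_mul_unitary _ _ hVH, frobSq_unitary_mul _ _ hW]
    _ ≤ frobSq ((Wᴴ * X * V) - D) := key_ineq _ hY σ hσ
    _ = frobSq (X - A) := by
        rw [fact2, frobSq_mul_unitary _ _ hVH, frobSq_unitary_mul _ _ hW]
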